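/- Suppose the amplitude A = σ·U with U a nonnegative random variable, the phase θ is uniform on (−π, π] and independent of A, the amplitude quantizer satisfies the centroid condition with normalized distortion C = E[(U − Q(U))²] and E[U²] = 2, and the phase quantizer produces wrapped phase error δ uniform on [−h, h] (h = π/N_p) independent of A and Q(U). Then the expected squared pair error is E|z − ẑ|² = σ²·[C + 2·(2 − C)·(1 − sin(h)/h)], where z = A·e^{iθ} and ẑ = σ·Q(U)·e^{i(θ−δ)}. -/

import Mathlib

open MeasureTheory ProbabilityTheory Real

lemma ptwise (σ u v t d : ℝ) :
    ‖(σ * u : ℂ) * Complex.exp (t * Complex.I) -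
        (σ * v : ℂ) * Complex.exp (((t : ℂ) - (d : ℂ)) * Complex.I)‖ ^ 2 =
    σ ^ 2 * (u ^ 2 + v ^ 2 - 2 * (u * v) * Real.cos d) := by
  rw [show ((t : ℂ) - (d : ℂ)) = ((t - d : ℝ) : ℂ) by push_cast; ring]
  rw [Complex.sq_norm]
  simp only [Complex.normSq_apply, Complex.sub_re, Complex.sub_im, Complex.mul_re, Complex.mul_im,
    Complex.ofReal_re, Complex.ofReal_im, Complex.exp_ofReal_mul_I_re, Complex.exp_ofReal_mul_I_im,
    Real.cos_sub, Real.sin_sub]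
  linear_combination (σ^2*(u^2 - 2*u*v*Real.cos d) + σ^2*v^2) * Real.sin_sq_add_cos_sq t + σ^2*v^2*(Real.sin t^2 + Real.cos t^2) * Real.sin_sq_add_cos_sq d

/-- Rayleigh–Lloyd polar distortion: with amplitude `A = σ·U`, phase `θ` uniform
on `(-π, π]` independent of the amplitude, a centroid amplitude quantizer
`V = Q(U)` with normalized distortion `C = E[(U - Q(U))²]` and `E[U²] = 2`, and
wrapped phase error `δ` uniform on `[-h, h]` (`h = π / N_p`) independent of
`(U, Q(U))`, the expected squared pair error of `z = A e^{iθ}` against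
`ẑ = σ Q(U) e^{i(θ - δ)}` equals `σ²·[C + 2(2 - C)(1 - sin h / h)]`. -/
theorem rayleigh_lloyd_polar_distortion
    {Ω : Type*} [MeasureSpace Ω] [IsProbabilityMeasure (volume : Measure Ω)]
    (σ h : ℝ) (Np : ℕ) (hσ : 0 < σ) (hNp : 0 < Np) (hh : h = π / Np)
    (U V θ δ : Ω → ℝ)
    (hU : Measurable U) (hV : Measurable V) (hθ : Measurable θ)
    (hδ : Measurable δ)
    (hUnn : ∀ ω, 0 ≤ U ω)
    (hUint : Integrable (fun ω => (U ω) ^ 2))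
    (hU2 : (∫ ω, (U ω) ^ 2) = 2)
    (hVfin : (Set.range V).Finite)
    (hcentroid : V =ᵐ[volume]
      (volume : Measure Ω)[U | MeasurableSpace.comap V inferInstance])
    (hθlaw : Measure.map θ (volume : Measure Ω) =
      (ENNReal.ofReal (2 * π))⁻¹ • volume.restrict (Set.Ioc (-π) π))
    (hθindep : IndepFun θ (fun ω => σ * U ω))
    (hδlaw : Measure.map δ (volume : Measure Ω) =
      (ENNReal.ofReal (2 * h))⁻¹ • volume.restrict (Set.Icc (-h) h))
    (hδindep : IndepFun δ (fun ω => (U ω, V ω)))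
    (C : ℝ) (hC : C = ∫ ω, (U ω - V ω) ^ 2) :
    (∫ ω, ‖(σ * U ω : ℂ) * Complex.exp (θ ω * Complex.I) -
        (σ * V ω : ℂ) * Complex.exp ((θ ω - δ ω) * Complex.I)‖ ^ 2) =
      σ ^ 2 * (C + 2 * (2 - C) * (1 - Real.sin h / h)) := by
  have hhpos : 0 < h := by
    rw [hh]; exact div_pos Real.pi_pos (by exact_mod_cast hNp)
  -- bound on V
  obtain ⟨M, hMmem⟩ := (hVfin.image (fun x => |x|)).bddAbove
  have hM : ∀ ω, |V ω| ≤ M := fun ω => hMmem ⟨V ω, Set.mem_range_self ω, rfl⟩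
  -- integrabilities
  have hbound : Integrable (fun ω => U ω ^ 2 + 1) := hUint.add (integrable_const 1)
  have hUL1 : Integrable U := by
    refine hbound.mono' hU.aestronglyMeasurable ?_
    exact Filter.Eventually.of_forall fun ω => by
      rw [Real.norm_eq_abs]; nlinarith [sq_abs (U ω), sq_nonneg (|U ω| - 1)]
  have hVL1 : Integrable V := by
    refine (integrable_const M).mono' hV.aestronglyMeasurable ?_
    exact Filter.Eventually.of_forall fun ω => by rw [Real.norm_eq_abs]; exact hM ω
  have hV2 : Integrable (fun ω => V ω ^ 2) := by
    refine (integrable_const (M * M)).mono' (hV.pow_const 2).aestronglyMeasurable ?_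
    exact Filter.Eventually.of_forall fun ω => by
      rw [Real.norm_eq_abs, sq, abs_mul]
      exact mul_le_mul (hM ω) (hM ω) (abs_nonneg _) ((abs_nonneg _).trans (hM ω))
  have hUV : Integrable (fun ω => U ω * V ω) := by
    refine ((hUL1.abs).const_mul M).mono' (hU.mul hV).aestronglyMeasurable ?_
    exact Filter.Eventually.of_forall fun ω => by
      rw [Real.norm_eq_abs, abs_mul, mul_comm]
      exact mul_le_mul (hM ω) le_rfl (abs_nonneg _) ((abs_nonneg _).trans (hM ω))
  have hUVc : Integrable (fun ω => U ω * V ω * Real.cos (δ ω)) := by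
    refine ((hUL1.abs).const_mul M).mono'
      ((hU.mul hV).mul (Real.measurable_cos.comp hδ)).aestronglyMeasurable ?_
    exact Filter.Eventually.of_forall fun ω => by
      rw [Real.norm_eq_abs, abs_mul, abs_mul]
      calc |U ω| * |V ω| * |Real.cos (δ ω)| ≤ |U ω| * |V ω| * 1 := by
            exact mul_le_mul_of_nonneg_left (Real.abs_cos_le_one _)
              (mul_nonneg (abs_nonneg _) (abs_nonneg _))
        _ = |V ω| * |U ω| := by ring
        _ ≤ M * |U ω| := mul_le_mul_of_nonneg_right (hM ω) (abs_nonneg _)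
  have hcosint : Integrable (fun ω => Real.cos (δ ω)) := by
    refine (integrable_const 1).mono'
      (Real.measurable_cos.comp hδ).aestronglyMeasurable ?_
    exact Filter.Eventually.of_forall fun ω => by
      rw [Real.norm_eq_abs]; exact Real.abs_cos_le_one _
  -- E[cos δ] = sin h / h
  have Ecos : (∫ ω, Real.cos (δ ω)) = Real.sin h / h := by
    have h1 : (∫ ω, Real.cos (δ ω)) = ∫ x, Real.cos x ∂(Measure.map δ volume) :=
      (integral_map hδ.aemeasurable Real.measurable_cos.aestronglyMeasurable).symm
    rw [h1, hδlaw, integral_smul_measure, ENNReal.toReal_inv,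
      ENNReal.toReal_ofReal (by positivity), MeasureTheory.integral_Icc_eq_integral_Ioc,
      ← intervalIntegral.integral_of_le (by linarith : -h ≤ h),
      integral_cos, Real.sin_neg, smul_eq_mul]
    field_simp
    ring
  -- independence: E[UV cos δ] = E[UV] E[cos δ]
  have hind : IndepFun (fun ω => U ω * V ω) (fun ω => Real.cos (δ ω)) :=
    ((hδindep.comp Real.measurable_cos (measurable_fst.mul measurable_snd)).symm)
  have Eprod : (∫ ω, U ω * V ω * Real.cos (δ ω)) =
      (∫ ω, U ω * V ω) * ∫ ω, Real.cos (δ ω) :=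
    hind.integral_fun_mul_eq_mul_integral hUV.aestronglyMeasurable hcosint.aestronglyMeasurable
  -- centroid: E[UV] = E[V²]
  have hm : MeasurableSpace.comap V inferInstance ≤
      (inferInstance : MeasurableSpace Ω) := hV.comap_le
  have hVm : StronglyMeasurable[MeasurableSpace.comap V inferInstance] V :=
    (Measurable.of_comap_le le_rfl).stronglyMeasurable
  have hVU : Integrable (fun ω => V ω * U ω) := by
    simpa [mul_comm] using hUV
  have hpull := condExp_mul_of_stronglyMeasurable_left (μ := (volume : Measure Ω)) hVm hVU hUL1
  have EUV : (∫ ω, U ω * V ω) = ∫ ω, V ω ^ 2 := by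
    have e1 := (integral_condExp (μ := (volume : Measure Ω))
      (f := fun ω => V ω * U ω) hm).symm
    have e2 := integral_congr_ae hpull
    have e3 : (∫ ω, (V * (volume : Measure Ω)[U | MeasurableSpace.comap V inferInstance]) ω)
        = ∫ ω, V ω ^ 2 := by
      refine integral_congr_ae ?_
      filter_upwards [hcentroid] with ω hω
      simp only [Pi.mul_apply]
      rw [sq, ← hω]
    calc (∫ ω, U ω * V ω) = ∫ ω, V ω * U ω := by simp_rw [mul_comm]
      _ = _ := e1.trans (e2.trans e3)
  -- V second moment
  have EV2 : (∫ ω, V ω ^ 2) = 2 - C := by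
    have expand : (fun ω => (U ω - V ω) ^ 2)
        = fun ω => (U ω ^ 2 - 2 * (U ω * V ω)) + V ω ^ 2 := by
      funext ω; ring
    have hIa : Integrable (fun ω => U ω ^ 2 - 2 * (U ω * V ω)) :=
      hUint.sub (hUV.const_mul 2)
    have hIb : Integrable (fun ω => 2 * (U ω * V ω)) := hUV.const_mul 2
    rw [expand, integral_add hIa hV2, integral_sub hUint hIb,
      integral_const_mul, hU2, EUV] at hC
    linarith
  -- main computation
  have hpt : (∫ ω, ‖(σ * U ω : ℂ) * Complex.exp (θ ω * Complex.I) -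
        (σ * V ω : ℂ) * Complex.exp ((θ ω - δ ω) * Complex.I)‖ ^ 2)
      = ∫ ω, σ ^ 2 * (U ω ^ 2 + V ω ^ 2 - 2 * (U ω * V ω) * Real.cos (δ ω)) := by
    refine integral_congr_ae (Filter.Eventually.of_forall fun ω => ?_)
    exact ptwise σ (U ω) (V ω) (θ ω) (δ ω)
  rw [hpt]
  have hint2 : Integrable (fun ω => U ω ^ 2 + V ω ^ 2) := hUint.add hV2
  have hint3 : Integrable (fun ω => 2 * (U ω * V ω) * Real.cos (δ ω)) := by
    simpa [mul_assoc, mul_comm, mul_left_comm] using hUVc.const_mul 2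
  rw [integral_const_mul, integral_sub hint2 hint3, integral_add hUint hV2, hU2, EV2]
  have : (∫ ω, 2 * (U ω * V ω) * Real.cos (δ ω))
      = 2 * ((∫ ω, U ω * V ω) * ∫ ω, Real.cos (δ ω)) := by
    rw [← Eprod, ← integral_const_mul]
    congr 1; funext ω; ring
  rw [this, EUV, EV2, Ecos]
  ring
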